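/- Let N = FreeAlgebra ℤ {n : ℕ // 0 < n}, the free associative ℤ-algebra on generators z₁, z₂, z₃, …, one for each positive integer, and set z₀ = 1. Let Δ : N → N ⊗[ℤ] N be the unique ℤ-algebra homomorphism with Δ(z_n) = Σ_{s+t=n, s,t ≥ 0} z_s ⊗ z_t for each n ≥ 1, and let ε : N → ℤ be the unique ℤ-algebra homomorphism with ε(z_n) = 0 for all n ≥ 1. Then ε is a counit for Δ: the composites (ε ⊗ id) ∘ Δ and (id ⊗ ε) ∘ Δ both equal the identity of N after the canonical identifications ℤ ⊗[ℤ] N ≅ N and N ⊗[ℤ] ℤ ≅ N. Moreover there exists a ℤ-linear map S : N → N (an antipode) such that mul ∘ (S ⊗ id) ∘ Δ = (algebraMap ℤ N) ∘ ε and mul ∘ (id ⊗ S) ∘ Δ = (algebraMap ℤ N) ∘ ε, where mul : N ⊗[ℤ] N → N is the linear map induced by multiplication. -/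

import Mathlib

open TensorProduct

/-- The generators `z n` of the free `ℤ`-algebra on the positive integers,
with the convention `z 0 = 1`. -/
noncomputable def zGen : ℕ → FreeAlgebra ℤ {n : ℕ // 0 < n} := fun n =>
  if h : 0 < n then FreeAlgebra.ι ℤ ⟨n, h⟩ else 1

abbrev NN := FreeAlgebra ℤ {n : ℕ // 0 < n}

section

attribute [local instance 2000] Algebra.toModule

lemma zGen_zero : zGen 0 = 1 := rfl

noncomputable def Szn : ℕ → NN
  | 0 => 1
  | n + 1 => -∑ s ∈ (Finset.range (n+1)).attach, Szn s.1 * zGen (n + 1 - s.1)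
decreasing_by exact Finset.mem_range.mp s.2

noncomputable def Tzn : ℕ → NN
  | 0 => 1
  | n + 1 => -∑ s ∈ (Finset.range (n+1)).attach, zGen (n + 1 - s.1) * Tzn s.1
decreasing_by exact Finset.mem_range.mp s.2

lemma Szn_succ (n : ℕ) :
    Szn (n+1) = -∑ s ∈ Finset.range (n+1), Szn s * zGen (n + 1 - s) := by
  rw [Szn, ← Finset.sum_attach (Finset.range (n+1)) (fun s => Szn s * zGen (n+1-s))]

lemma Tzn_succ (n : ℕ) :
    Tzn (n+1) = -∑ s ∈ Finset.range (n+1), zGen (n + 1 - s) * Tzn s := by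
  rw [Tzn, ← Finset.sum_attach (Finset.range (n+1)) (fun s => zGen (n+1-s) * Tzn s)]

lemma left_id (n : ℕ) :
    ∑ p ∈ Finset.HasAntidiagonal.antidiagonal n, Szn p.1 * zGen p.2 = if n = 0 then 1 else 0 := by
  rw [Finset.Nat.sum_antidiagonal_eq_sum_range_succ_mk]
  cases n with
  | zero => simp [Szn, zGen_zero]
  | succ n =>
    rw [Finset.sum_range_succ]
    simp only [Nat.sub_self, zGen_zero, mul_one]
    rw [Szn_succ]
    simp

lemma right_id_T (n : ℕ) :
    ∑ p ∈ Finset.HasAntidiagonal.antidiagonal n, zGen p.1 * Tzn p.2 = if n = 0 then 1 else 0 := by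
  rw [Finset.Nat.sum_antidiagonal_eq_sum_range_succ_mk]
  cases n with
  | zero => simp [Tzn, zGen_zero]
  | succ n =>
    rw [Finset.sum_range_succ']
    simp only [Nat.sub_zero, zGen_zero, one_mul]
    rw [Tzn_succ]
    rw [← Finset.sum_range_reflect (fun s => zGen (n + 1 - s) * Tzn s) (n+1)]
    have : ∀ j ∈ Finset.range (n+1),
        zGen (n + 1 - (n + 1 - 1 - j)) * Tzn (n + 1 - 1 - j) = zGen (j+1) * Tzn (n+1-(j+1)) := by
      intro j hj
      have hj' : j ≤ n := Nat.lt_succ_iff.mp (Finset.mem_range.mp hj)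
      congr 2 <;> omega
    rw [Finset.sum_congr rfl this]
    simp

lemma Szn_eq_Tzn : Szn = Tzn := by
  have h1 : (PowerSeries.mk Szn) * (PowerSeries.mk zGen) = 1 := by
    ext n
    rw [PowerSeries.coeff_mul]
    simp only [PowerSeries.coeff_mk]
    rw [left_id]
    simp [PowerSeries.coeff_one]
  have h2 : (PowerSeries.mk zGen) * (PowerSeries.mk Tzn) = 1 := by
    ext n
    rw [PowerSeries.coeff_mul]
    simp only [PowerSeries.coeff_mk]
    rw [right_id_T]
    simp [PowerSeries.coeff_one]
  have : PowerSeries.mk Szn = PowerSeries.mk Tzn := by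
    calc PowerSeries.mk Szn = PowerSeries.mk Szn * 1 := by rw [mul_one]
    _ = PowerSeries.mk Szn * ((PowerSeries.mk zGen) * (PowerSeries.mk Tzn)) := by rw [h2]
    _ = (PowerSeries.mk Szn * PowerSeries.mk zGen) * PowerSeries.mk Tzn := by rw [mul_assoc]
    _ = PowerSeries.mk Tzn := by rw [h1, one_mul]
  funext n
  have := congrArg (PowerSeries.coeff n) this
  simpa using this

lemma right_id (n : ℕ) :
    ∑ p ∈ Finset.HasAntidiagonal.antidiagonal n, zGen p.1 * Szn p.2 = if n = 0 then 1 else 0 := by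
  rw [Szn_eq_Tzn]; exact right_id_T n

noncomputable def antipodeAlg : NN →ₐ[ℤ] NNᵐᵒᵖ :=
  FreeAlgebra.lift ℤ (fun i : {n : ℕ // 0 < n} => MulOpposite.op (Szn i.1))

noncomputable def Smap : NN →ₗ[ℤ] NN :=
  (MulOpposite.opLinearEquiv ℤ).symm.toLinearMap ∘ₗ antipodeAlg.toLinearMap

lemma Smap_apply (x : NN) : Smap x = (antipodeAlg x).unop := rfl

lemma Smap_one : Smap 1 = 1 := by simp [Smap_apply]

lemma Smap_mul (x y : NN) : Smap (x * y) = Smap y * Smap x := by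
  simp [Smap_apply, map_mul]

lemma Smap_zGen (k : ℕ) : Smap (zGen k) = Szn k := by
  cases k with
  | zero => simpa [zGen_zero, Szn] using Smap_one
  | succ k =>
    simp [Smap_apply, zGen, antipodeAlg]

noncomputable def phiL : NN ⊗[ℤ] NN →ₗ[ℤ] NN :=
  LinearMap.mul' ℤ NN ∘ₗ TensorProduct.map Smap LinearMap.id

noncomputable def phiR : NN ⊗[ℤ] NN →ₗ[ℤ] NN :=
  LinearMap.mul' ℤ NN ∘ₗ TensorProduct.map LinearMap.id Smap

lemma phiL_tmul (b b' : NN) : phiL (b ⊗ₜ[ℤ] b') = Smap b * b' := by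
  simp [phiL]

lemma phiR_tmul (b b' : NN) : phiR (b ⊗ₜ[ℤ] b') = b * Smap b' := by
  simp [phiR]

noncomputable def psiL (c : NN) : NN ⊗[ℤ] NN →ₗ[ℤ] NN :=
  TensorProduct.lift (LinearMap.mk₂ ℤ (fun b b' => Smap b * c * b')
    (fun b₁ b₂ b' => by simp [map_add, add_mul])
    (fun r b b' => by rw [map_smul, smul_mul_assoc, smul_mul_assoc]; rfl)
    (fun b b₁ b₂ => by simp [mul_add])
    (fun r b b' => by rw [mul_smul_comm]))

noncomputable def psiR (c : NN) : NN ⊗[ℤ] NN →ₗ[ℤ] NN :=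
  TensorProduct.lift (LinearMap.mk₂ ℤ (fun a a' => a * c * Smap a')
    (fun b₁ b₂ b' => by simp [add_mul])
    (fun r b b' => by rw [smul_mul_assoc, smul_mul_assoc])
    (fun b b₁ b₂ => by simp [map_add, mul_add])
    (fun r b b' => by rw [map_smul, mul_smul_comm]; rfl))

lemma psiL_tmul (c b b' : NN) : psiL c (b ⊗ₜ[ℤ] b') = Smap b * c * b' := rfl
lemma psiR_tmul (c a a' : NN) : psiR c (a ⊗ₜ[ℤ] a') = a * c * Smap a' := rfl

lemma psiL_add (c₁ c₂ : NN) : psiL (c₁ + c₂) = psiL c₁ + psiL c₂ := by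
  apply TensorProduct.ext'
  intro b b'
  simp [psiL_tmul, mul_add, add_mul]

lemma psiL_smul (r : ℤ) (c : NN) : psiL (r • c) = r • psiL c := by
  apply TensorProduct.ext'
  intro b b'
  rw [LinearMap.smul_apply, psiL_tmul, psiL_tmul, mul_smul_comm, smul_mul_assoc]
  rfl

lemma psiR_add (c₁ c₂ : NN) : psiR (c₁ + c₂) = psiR c₁ + psiR c₂ := by
  apply TensorProduct.ext'
  intro b b'
  simp [psiR_tmul, mul_add, add_mul]

lemma psiR_smul (r : ℤ) (c : NN) : psiR (r • c) = r • psiR c := by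
  apply TensorProduct.ext'
  intro b b'
  rw [LinearMap.smul_apply, psiR_tmul, psiR_tmul, mul_smul_comm, smul_mul_assoc]
  rfl

lemma psiL_one : psiL 1 = phiL := by
  apply TensorProduct.ext'
  intro b b'
  simp [psiL_tmul, phiL_tmul]

lemma psiR_one : psiR 1 = phiR := by
  apply TensorProduct.ext'
  intro a a'
  simp [psiR_tmul, phiR_tmul]

lemma convL (u v : NN ⊗[ℤ] NN) : phiL (u * v) = psiL (phiL u) v := by
  induction u using TensorProduct.induction_on with
  | zero => simp [show psiL 0 = 0 by simpa using psiL_smul 0 0]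
  | tmul a a' =>
    induction v using TensorProduct.induction_on with
    | zero => simp
    | tmul b b' =>
      rw [Algebra.TensorProduct.tmul_mul_tmul, phiL_tmul, psiL_tmul, phiL_tmul,
        Smap_mul]
      rw [mul_assoc, mul_assoc, mul_assoc]
    | add v₁ v₂ h1 h2 => simp [mul_add, h1, h2]
  | add u₁ u₂ h1 h2 => simp [add_mul, h1, h2, psiL_add]

lemma convR (u v : NN ⊗[ℤ] NN) : phiR (u * v) = psiR (phiR v) u := by
  induction v using TensorProduct.induction_on with
  | zero => simp [show psiR 0 = 0 by simpa using psiR_smul 0 0]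
  | tmul b b' =>
    induction u using TensorProduct.induction_on with
    | zero => simp
    | tmul a a' =>
      rw [Algebra.TensorProduct.tmul_mul_tmul, phiR_tmul, psiR_tmul, phiR_tmul,
        Smap_mul]
      rw [mul_assoc, mul_assoc, mul_assoc]
    | add u₁ u₂ h1 h2 => simp [add_mul, h1, h2]
  | add v₁ v₂ h1 h2 => simp [mul_add, h1, h2, psiR_add]

theorem stmt_9_aux
    (Δ : FreeAlgebra ℤ {n : ℕ // 0 < n} →ₐ[ℤ]
        @TensorProduct ℤ _ (FreeAlgebra ℤ {n : ℕ // 0 < n}) (FreeAlgebra ℤ {n : ℕ // 0 < n})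
          _ _ Algebra.toModule Algebra.toModule)
    (hΔ : ∀ (n : ℕ) (hn : 0 < n), Δ (FreeAlgebra.ι ℤ ⟨n, hn⟩) =
        ∑ p ∈ Finset.HasAntidiagonal.antidiagonal n, zGen p.1 ⊗ₜ[ℤ] zGen p.2)
    (ε : FreeAlgebra ℤ {n : ℕ // 0 < n} →ₐ[ℤ] ℤ)
    (hε : ∀ n : {n : ℕ // 0 < n}, ε (FreeAlgebra.ι ℤ n) = 0) :
    ((Algebra.TensorProduct.lid ℤ (FreeAlgebra ℤ {n : ℕ // 0 < n})).toAlgHom.comp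
        ((Algebra.TensorProduct.map ε (AlgHom.id ℤ (FreeAlgebra ℤ {n : ℕ // 0 < n}))).comp Δ) =
      AlgHom.id ℤ (FreeAlgebra ℤ {n : ℕ // 0 < n})) ∧
    ((Algebra.TensorProduct.rid ℤ ℤ (FreeAlgebra ℤ {n : ℕ // 0 < n})).toAlgHom.comp
        ((Algebra.TensorProduct.map (AlgHom.id ℤ (FreeAlgebra ℤ {n : ℕ // 0 < n})) ε).comp Δ) =
      AlgHom.id ℤ (FreeAlgebra ℤ {n : ℕ // 0 < n})) ∧
    (∃ S : FreeAlgebra ℤ {n : ℕ // 0 < n} →ₗ[ℤ] FreeAlgebra ℤ {n : ℕ // 0 < n},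
      (LinearMap.mul' ℤ (FreeAlgebra ℤ {n : ℕ // 0 < n})) ∘ₗ
          (TensorProduct.map S LinearMap.id) ∘ₗ Δ.toLinearMap =
        (Algebra.linearMap ℤ (FreeAlgebra ℤ {n : ℕ // 0 < n})) ∘ₗ ε.toLinearMap ∧
      (LinearMap.mul' ℤ (FreeAlgebra ℤ {n : ℕ // 0 < n})) ∘ₗ
          (TensorProduct.map LinearMap.id S) ∘ₗ Δ.toLinearMap =
        (Algebra.linearMap ℤ (FreeAlgebra ℤ {n : ℕ // 0 < n})) ∘ₗ ε.toLinearMap) := by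
  have hεz : ∀ k : ℕ, ε (zGen k) = if k = 0 then 1 else 0 := by
    intro k
    cases k with
    | zero => simp [zGen_zero]
    | succ k => simp [zGen, hε]
  refine ⟨?_, ?_, ?_⟩
  · apply FreeAlgebra.hom_ext
    funext n
    obtain ⟨n, hn⟩ := n
    simp only [Function.comp_apply, AlgHom.coe_comp, AlgHom.id_apply, AlgEquiv.toAlgHom_eq_coe,
      AlgHom.coe_coe]
    rw [hΔ n hn, map_sum, map_sum]
    simp only [Algebra.TensorProduct.map_tmul, AlgHom.id_apply,
      Algebra.TensorProduct.lid_tmul, hεz]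
    rw [Finset.Nat.sum_antidiagonal_eq_sum_range_succ_mk]
    cases n with
    | zero => omega
    | succ n =>
      rw [Finset.sum_range_succ']
      simp [zGen, hn]
      exact one_smul _ _
  · apply FreeAlgebra.hom_ext
    funext n
    obtain ⟨n, hn⟩ := n
    simp only [Function.comp_apply, AlgHom.coe_comp, AlgHom.id_apply, AlgEquiv.toAlgHom_eq_coe,
      AlgHom.coe_coe]
    rw [hΔ n hn, map_sum, map_sum]
    simp only [Algebra.TensorProduct.map_tmul, AlgHom.id_apply,
      Algebra.TensorProduct.rid_tmul, hεz]
    rw [Finset.Nat.sum_antidiagonal_eq_sum_range_succ_mk]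
    cases n with
    | zero => omega
    | succ n =>
      rw [Finset.sum_range_succ]
      rw [Finset.sum_eq_zero fun k hk => by
        have hk' := Finset.mem_range.mp hk
        show (if n + 1 - k = 0 then (1:ℤ) else 0) • zGen k = 0
        rw [if_neg (by omega), zero_smul]]
      rw [zero_add]
      show (if n + 1 - (n+1) = 0 then (1:ℤ) else 0) • zGen (n+1) = _
      rw [Nat.sub_self, if_pos rfl, one_smul, zGen, dif_pos hn]
  · refine ⟨Smap, ?_, ?_⟩
    · have key : ∀ x : NN, phiL (Δ x) = ε x • (1 : NN) := by
        intro x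
        induction x using FreeAlgebra.induction with
        | grade0 r =>
          rw [AlgHom.commutes, AlgHom.commutes]
          rw [Algebra.algebraMap_eq_smul_one, Algebra.algebraMap_eq_smul_one]
          rw [map_smul]
          rw [show ((1 : NN ⊗[ℤ] NN) = (1:NN) ⊗ₜ[ℤ] (1:NN)) from rfl, phiL_tmul, Smap_one,
            one_mul]
          simp
        | grade1 i =>
          obtain ⟨n, hn⟩ := i
          rw [hΔ n hn, map_sum]
          simp only [phiL_tmul, Smap_zGen]
          rw [left_id, if_neg (by omega), hε, zero_smul]
        | mul a b ha hb =>
          rw [map_mul, convL, ha, psiL_smul, LinearMap.smul_apply, psiL_one, hb, map_mul]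
          exact smul_smul _ _ _
        | add a b ha hb =>
          rw [map_add, map_add, map_add, ha, hb, add_smul]
          rfl
      apply LinearMap.ext
      intro x
      have := key x
      simpa [phiL, Algebra.algebraMap_eq_smul_one] using this
    · have key : ∀ x : NN, phiR (Δ x) = ε x • (1 : NN) := by
        intro x
        induction x using FreeAlgebra.induction with
        | grade0 r =>
          rw [AlgHom.commutes, AlgHom.commutes]
          rw [Algebra.algebraMap_eq_smul_one, Algebra.algebraMap_eq_smul_one]
          rw [map_smul]
          rw [show ((1 : NN ⊗[ℤ] NN) = (1:NN) ⊗ₜ[ℤ] (1:NN)) from rfl, phiR_tmul, Smap_one,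
            mul_one]
          simp
        | grade1 i =>
          obtain ⟨n, hn⟩ := i
          rw [hΔ n hn, map_sum]
          simp only [phiR_tmul, Smap_zGen]
          rw [right_id, if_neg (by omega), hε, zero_smul]
        | mul a b ha hb =>
          rw [map_mul, convR, hb, psiR_smul, LinearMap.smul_apply, psiR_one, ha, map_mul,
            mul_comm (ε a) (ε b)]
          exact smul_smul _ _ _
        | add a b ha hb =>
          rw [map_add, map_add, map_add, ha, hb, add_smul]
          rfl
      apply LinearMap.ext
      intro x
      have := key x
      simpa [phiR, Algebra.algebraMap_eq_smul_one] using this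

end

/-- On `N = FreeAlgebra ℤ {n : ℕ // 0 < n}` (the algebra of non-symmetric
functions) with coproduct `Δ (z n) = ∑_{s + t = n} z s ⊗ z t` (where `z 0 = 1`), the
algebra map `ε` with `ε (z n) = 0` for `n ≥ 1` is a counit, and there exists an antipode:
a `ℤ`-linear map `S : N → N` with `mul ∘ (S ⊗ id) ∘ Δ = algebraMap ∘ ε = mul ∘ (id ⊗ S) ∘ Δ`. -/
theorem stmt_9
    (Δ : FreeAlgebra ℤ {n : ℕ // 0 < n} →ₐ[ℤ]
        @TensorProduct ℤ _ (FreeAlgebra ℤ {n : ℕ // 0 < n}) (FreeAlgebra ℤ {n : ℕ // 0 < n})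
          _ _ Algebra.toModule Algebra.toModule)
    (hΔ : ∀ (n : ℕ) (hn : 0 < n), Δ (FreeAlgebra.ι ℤ ⟨n, hn⟩) =
        ∑ p ∈ Finset.HasAntidiagonal.antidiagonal n, zGen p.1 ⊗ₜ[ℤ] zGen p.2)
    (ε : FreeAlgebra ℤ {n : ℕ // 0 < n} →ₐ[ℤ] ℤ)
    (hε : ∀ n : {n : ℕ // 0 < n}, ε (FreeAlgebra.ι ℤ n) = 0) :
    ((Algebra.TensorProduct.lid ℤ (FreeAlgebra ℤ {n : ℕ // 0 < n})).toAlgHom.comp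
        ((Algebra.TensorProduct.map ε (AlgHom.id ℤ (FreeAlgebra ℤ {n : ℕ // 0 < n}))).comp Δ) =
      AlgHom.id ℤ (FreeAlgebra ℤ {n : ℕ // 0 < n})) ∧
    ((Algebra.TensorProduct.rid ℤ ℤ (FreeAlgebra ℤ {n : ℕ // 0 < n})).toAlgHom.comp
        ((Algebra.TensorProduct.map (AlgHom.id ℤ (FreeAlgebra ℤ {n : ℕ // 0 < n})) ε).comp Δ) =
      AlgHom.id ℤ (FreeAlgebra ℤ {n : ℕ // 0 < n})) ∧
    (∃ S : FreeAlgebra ℤ {n : ℕ // 0 < n} →ₗ[ℤ] FreeAlgebra ℤ {n : ℕ // 0 < n},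
      (LinearMap.mul' ℤ (FreeAlgebra ℤ {n : ℕ // 0 < n})) ∘ₗ
          (TensorProduct.map S LinearMap.id) ∘ₗ Δ.toLinearMap =
        (Algebra.linearMap ℤ (FreeAlgebra ℤ {n : ℕ // 0 < n})) ∘ₗ ε.toLinearMap ∧
      (LinearMap.mul' ℤ (FreeAlgebra ℤ {n : ℕ // 0 < n})) ∘ₗ
          (TensorProduct.map LinearMap.id S) ∘ₗ Δ.toLinearMap =
        (Algebra.linearMap ℤ (FreeAlgebra ℤ {n : ℕ // 0 < n})) ∘ₗ ε.toLinearMap) := by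
  exact stmt_9_aux Δ hΔ ε hε
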